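/- Let ν ∈ ℕ, ν ≥ 1, let g : ℝ^ν → ℝ be continuous, let k₀ ∈ ℝ^ν and set λ = g(k₀). Let f : ℝ^ν → ℂ be continuous with compact support and define u_n(k) = n^{ν/2} f(n(k − k₀)) for n ≥ 1. Then: (i) ‖u_n‖_{L²(ℝ^ν)} = ‖f‖_{L²(ℝ^ν)} for all n; (ii) ‖(g − λ)u_n‖_{L²(ℝ^ν)} → 0 as n → ∞; (iii) u_n converges weakly to 0 in L²(ℝ^ν), i.e. ∫ \overline{u_n(k)} h(k) dk → 0 for every h ∈ L²(ℝ^ν). -/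

import Mathlib

open MeasureTheory Filter ENNReal

lemma aux_scale {ν : ℕ} (k₀ : EuclideanSpace ℝ (Fin ν))
    (F : EuclideanSpace ℝ (Fin ν) → ℝ≥0∞) (hF : Measurable F) (r : ℝ) (hr : r ≠ 0) :
    ∫⁻ k, F (r • (k - k₀)) = ENNReal.ofReal (|r| ^ ν)⁻¹ * ∫⁻ x, F x := by
  have h1 : ∫⁻ k, F (r • (k - k₀)) = ∫⁻ y, F (r • y) :=
    lintegral_sub_right_eq_self (fun y => F (r • y)) k₀
  have h2 : ∫⁻ y, F (r • y) ∂(volume) = ∫⁻ y, F y ∂(Measure.map (r • ·) volume) :=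
    (lintegral_map hF (measurable_const_smul r)).symm
  rw [h1, h2, Measure.map_addHaar_smul volume hr, lintegral_smul_measure,
    finrank_euclideanSpace_fin, abs_inv, abs_pow, smul_eq_mul]

lemma sq_enorm_mul (c : ℝ) (hc : 0 ≤ c) (z : ℂ) :
    ((‖(c:ℂ) * z‖₊ : ℝ≥0∞)) ^ (2:ℝ)
      = ENNReal.ofReal (c ^ (2:ℝ)) * (‖z‖₊ : ℝ≥0∞) ^ (2:ℝ) := by
  rw [← enorm_eq_nnnorm, ← enorm_eq_nnnorm, ← ofReal_norm_eq_enorm, ← ofReal_norm_eq_enorm,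
    ENNReal.ofReal_rpow_of_nonneg (norm_nonneg _) (by norm_num : (0:ℝ) ≤ 2),
    ENNReal.ofReal_rpow_of_nonneg (norm_nonneg _) (by norm_num : (0:ℝ) ≤ 2),
    ← ENNReal.ofReal_mul (by positivity)]
  congr 1
  rw [norm_mul, Real.mul_rpow (norm_nonneg _) (norm_nonneg _)]
  congr 2
  rw [Complex.norm_real, Real.norm_eq_abs, abs_of_nonneg hc]

theorem stmt_12 (ν : ℕ) (hν : 1 ≤ ν)
    (g : EuclideanSpace ℝ (Fin ν) → ℝ) (hg : Continuous g)
    (k₀ : EuclideanSpace ℝ (Fin ν)) (lam : ℝ) (hlam : lam = g k₀)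
    (f : EuclideanSpace ℝ (Fin ν) → ℂ) (hf : Continuous f) (hfc : HasCompactSupport f)
    (u : ℕ → EuclideanSpace ℝ (Fin ν) → ℂ)
    (hu : ∀ (n : ℕ) (k : EuclideanSpace ℝ (Fin ν)),
      u n k = (((n : ℝ) ^ ((ν : ℝ) / 2) : ℝ) : ℂ) * f ((n : ℝ) • (k - k₀))) :
    (∀ n : ℕ, 1 ≤ n →
      eLpNorm (u n) 2 (volume : Measure (EuclideanSpace ℝ (Fin ν))) =
        eLpNorm f 2 volume) ∧
    Tendsto (fun n : ℕ =>
        eLpNorm (fun k => ((g k : ℂ) - (lam : ℂ)) * u n k) 2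
          (volume : Measure (EuclideanSpace ℝ (Fin ν))))
      atTop (nhds 0) ∧
    (∀ h : EuclideanSpace ℝ (Fin ν) → ℂ,
      MemLp h 2 (volume : Measure (EuclideanSpace ℝ (Fin ν))) →
      Tendsto (fun n : ℕ => ∫ k, (starRingEnd ℂ) (u n k) * h k) atTop (nhds 0)) := by
  have h2R : ((2:ℝ≥0∞)).toReal = (2:ℝ) := by norm_num
  -- measurability of ‖f‖² integrand
  have hmf2 : Measurable fun x : EuclideanSpace ℝ (Fin ν) => ((‖f x‖₊ : ℝ≥0∞)) ^ (2:ℝ) :=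
    (hf.measurable.nnnorm.coe_nnreal_ennreal).pow_const _
  -- the map k ↦ n•(k-k₀) is measurable
  have hmap : ∀ n : ℕ, Measurable fun k : EuclideanSpace ℝ (Fin ν) => (n:ℝ) • (k - k₀) :=
    fun n => by fun_prop
  -- constant fact: (n^{ν/2})² = n^ν
  have hconst : ∀ n : ℕ, 1 ≤ n →
      ENNReal.ofReal (((n:ℝ) ^ ((ν:ℝ)/2)) ^ (2:ℝ)) * ENNReal.ofReal (|(n:ℝ)| ^ ν)⁻¹ = 1 := by
    intro n hn
    have hnpos : (0:ℝ) < (n:ℝ) := by exact_mod_cast hn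
    have h1 : ((n:ℝ) ^ ((ν:ℝ)/2)) ^ (2:ℝ) = (n:ℝ) ^ (ν:ℕ) := by
      rw [← Real.rpow_natCast (n:ℝ) ν, ← Real.rpow_mul hnpos.le]
      norm_num
    rw [h1, abs_of_nonneg hnpos.le, ← ENNReal.ofReal_mul (by positivity),
      mul_inv_cancel₀ (by positivity), ENNReal.ofReal_one]
  -- scaled integral identity
  have hInt : ∀ n : ℕ, 1 ≤ n →
      ∫⁻ k, ((‖u n k‖₊ : ℝ≥0∞)) ^ (2:ℝ) = ∫⁻ x, ((‖f x‖₊ : ℝ≥0∞)) ^ (2:ℝ) := by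
    intro n hn
    have hn0 : ((n:ℝ)) ≠ 0 := by positivity
    have heq : ∀ k, ((‖u n k‖₊ : ℝ≥0∞)) ^ (2:ℝ)
        = ENNReal.ofReal (((n:ℝ) ^ ((ν:ℝ)/2)) ^ (2:ℝ)) *
            ((‖f ((n:ℝ) • (k - k₀))‖₊ : ℝ≥0∞)) ^ (2:ℝ) := by
      intro k
      rw [hu n k, sq_enorm_mul _ (Real.rpow_nonneg (Nat.cast_nonneg n) _)]
    calc ∫⁻ k, ((‖u n k‖₊ : ℝ≥0∞)) ^ (2:ℝ)
        = ∫⁻ k, ENNReal.ofReal (((n:ℝ) ^ ((ν:ℝ)/2)) ^ (2:ℝ)) *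
            ((‖f ((n:ℝ) • (k - k₀))‖₊ : ℝ≥0∞)) ^ (2:ℝ) := by simp_rw [heq]
      _ = ENNReal.ofReal (((n:ℝ) ^ ((ν:ℝ)/2)) ^ (2:ℝ)) *
            ∫⁻ k, ((‖f ((n:ℝ) • (k - k₀))‖₊ : ℝ≥0∞)) ^ (2:ℝ) :=
          lintegral_const_mul _ (hmf2.comp (hmap n))
      _ = ENNReal.ofReal (((n:ℝ) ^ ((ν:ℝ)/2)) ^ (2:ℝ)) *
            (ENNReal.ofReal (|(n:ℝ)| ^ ν)⁻¹ * ∫⁻ x, ((‖f x‖₊ : ℝ≥0∞)) ^ (2:ℝ)) := by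
          rw [aux_scale k₀ _ hmf2 _ hn0]
      _ = ∫⁻ x, ((‖f x‖₊ : ℝ≥0∞)) ^ (2:ℝ) := by
          rw [← mul_assoc, hconst n hn, one_mul]
  have part1 : ∀ n : ℕ, 1 ≤ n →
      eLpNorm (u n) 2 (volume : Measure (EuclideanSpace ℝ (Fin ν))) = eLpNorm f 2 volume := by
    intro n hn
    rw [eLpNorm_eq_lintegral_rpow_enorm_toReal two_ne_zero ENNReal.ofNat_ne_top,
      eLpNorm_eq_lintegral_rpow_enorm_toReal two_ne_zero ENNReal.ofNat_ne_top, h2R]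
    simp_rw [enorm_eq_nnnorm]
    rw [hInt n hn]
  -- finiteness of ∫⁻ ‖f‖²
  have hIf : ∫⁻ x, ((‖f x‖₊ : ℝ≥0∞)) ^ (2:ℝ) ≠ ∞ := by
    have hmem := hf.memLp_of_hasCompactSupport (μ := volume) (p := 2) hfc
    have hlt := hmem.eLpNorm_lt_top
    rw [eLpNorm_eq_lintegral_rpow_enorm_toReal two_ne_zero ENNReal.ofNat_ne_top, h2R] at hlt
    simp_rw [enorm_eq_nnnorm] at hlt
    intro hcon
    rw [hcon] at hlt
    simp [ENNReal.top_rpow_of_pos (by norm_num : (0:ℝ) < 1/2)] at hlt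
  -- support radius
  obtain ⟨R₀, hR₀⟩ := hfc.isBounded.subset_closedBall 0
  set R : ℝ := max R₀ 0 with hRdef
  have hR : tsupport f ⊆ Metric.closedBall 0 R :=
    hR₀.trans (Metric.closedBall_subset_closedBall (le_max_left _ _))
  have hRnn : 0 ≤ R := le_max_right _ _
  -- bound of g - lam on closedBall k₀ R
  obtain ⟨C, hC⟩ := (isCompact_closedBall k₀ R).exists_bound_of_continuousOn
    ((hg.sub continuous_const).continuousOn)
  have hC0 : 0 ≤ C := le_trans (norm_nonneg _) (hC k₀ (Metric.mem_closedBall_self hRnn))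
  -- the family F
  set F : ℕ → EuclideanSpace ℝ (Fin ν) → ℝ≥0∞ := fun n x =>
    ((‖g (k₀ + ((n:ℝ))⁻¹ • x) - lam‖₊ : ℝ≥0∞)) ^ (2:ℝ) * ((‖f x‖₊ : ℝ≥0∞)) ^ (2:ℝ)
    with hFdef
  have hFmeas : ∀ n : ℕ, Measurable (F n) := by
    intro n
    exact (((hg.comp (continuous_const.add
        (continuous_const_smul _))).sub continuous_const).measurable.nnnorm.coe_nnreal_ennreal).pow_const _
      |>.mul hmf2
  have hinvle : ∀ n : ℕ, |((n:ℝ))⁻¹| ≤ 1 := by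
    intro n
    rcases Nat.eq_zero_or_pos n with rfl | hn
    · simp
    · rw [abs_of_nonneg (by positivity)]
      rw [inv_le_one_iff₀]
      right; exact_mod_cast hn
  have hF_bound : ∀ n : ℕ, ∀ x, F n x ≤
      ENNReal.ofReal (C ^ (2:ℝ)) * ((‖f x‖₊ : ℝ≥0∞)) ^ (2:ℝ) := by
    intro n x
    by_cases hx : f x = 0
    · simp [hFdef, hx, ENNReal.rpow_two]
    · have hxs : x ∈ tsupport f := subset_closure (by simpa [Function.mem_support] using hx)
      have hxR : ‖x‖ ≤ R := by simpa [Metric.mem_closedBall] using hR hxs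
      have hmem : k₀ + ((n:ℝ))⁻¹ • x ∈ Metric.closedBall k₀ R := by
        rw [Metric.mem_closedBall, dist_eq_norm]
        simp only [add_sub_cancel_left]
        rw [norm_smul, Real.norm_eq_abs]
        calc |((n:ℝ))⁻¹| * ‖x‖ ≤ 1 * ‖x‖ :=
              mul_le_mul_of_nonneg_right (hinvle n) (norm_nonneg _)
          _ ≤ R := by simpa using hxR
      have hle : ‖g (k₀ + ((n:ℝ))⁻¹ • x) - lam‖ ≤ C := hC _ hmem
      refine mul_le_mul_left ?_ _
      rw [← enorm_eq_nnnorm, ← ofReal_norm_eq_enorm,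
        ENNReal.ofReal_rpow_of_nonneg (norm_nonneg _) (by norm_num : (0:ℝ) ≤ 2)]
      exact ENNReal.ofReal_le_ofReal
        (Real.rpow_le_rpow (norm_nonneg _) hle (by norm_num))
  have hF_lim : ∀ x, Tendsto (fun n : ℕ => F n x) atTop (nhds 0) := by
    intro x
    have h1 : Tendsto (fun n : ℕ => ((n:ℝ))⁻¹) atTop (nhds 0) :=
      tendsto_inv_atTop_zero.comp tendsto_natCast_atTop_atTop
    have h2 : Tendsto (fun n : ℕ => g (k₀ + ((n:ℝ))⁻¹ • x) - lam) atTop (nhds 0) := by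
      have h3 : Tendsto (fun n : ℕ => k₀ + ((n:ℝ))⁻¹ • x) atTop (nhds k₀) := by
        have := (h1.smul_const x).const_add k₀
        simpa using this
      have h4 := (hg.continuousAt (x := k₀)).tendsto.comp h3
      have := h4.sub_const lam
      rw [← hlam] at this
      simpa using this
    have h5' : Tendsto (fun n : ℕ => ‖g (k₀ + ((n:ℝ))⁻¹ • x) - lam‖₊) atTop (nhds 0) := by
      have := (continuous_nnnorm.tendsto (0:ℝ)).comp h2
      simpa [Function.comp_def] using this
    have h5 : Tendsto (fun n : ℕ => ((‖g (k₀ + ((n:ℝ))⁻¹ • x) - lam‖₊ : ℝ≥0∞))) atTop (nhds 0) := by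
      simpa using ENNReal.tendsto_coe.2 h5'
    have h6 := h5.ennrpow_const 2
    rw [ENNReal.zero_rpow_of_pos (by norm_num)] at h6
    have hbne : ((‖f x‖₊ : ℝ≥0∞)) ^ (2:ℝ) ≠ ⊤ :=
      ENNReal.rpow_ne_top_of_nonneg (by norm_num) ENNReal.coe_ne_top
    have h7 := ENNReal.Tendsto.mul_const h6 (Or.inr hbne)
    rw [zero_mul] at h7
    exact h7
  have hTendF : Tendsto (fun n : ℕ => ∫⁻ x, F n x) atTop (nhds 0) := by
    have := tendsto_lintegral_of_dominated_convergence
      (fun x => ENNReal.ofReal (C ^ (2:ℝ)) * ((‖f x‖₊ : ℝ≥0∞)) ^ (2:ℝ))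
      hFmeas (fun n => Filter.Eventually.of_forall (hF_bound n))
      (by
        rw [lintegral_const_mul _ hmf2]
        exact ENNReal.mul_ne_top ENNReal.ofReal_ne_top hIf)
      (Filter.Eventually.of_forall (fun x => hF_lim x))
    simpa using this
  -- identify the integrals for n ≥ 1
  have hJF : ∀ n : ℕ, 1 ≤ n →
      ∫⁻ k, ((‖((g k : ℂ) - (lam : ℂ)) * u n k‖₊ : ℝ≥0∞)) ^ (2:ℝ) = ∫⁻ x, F n x := by
    intro n hn
    have hn0 : ((n:ℝ)) ≠ 0 := by positivity
    have heq : ∀ k, ((‖((g k : ℂ) - (lam : ℂ)) * u n k‖₊ : ℝ≥0∞)) ^ (2:ℝ)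
        = ENNReal.ofReal (((n:ℝ) ^ ((ν:ℝ)/2)) ^ (2:ℝ)) * F n ((n:ℝ) • (k - k₀)) := by
      intro k
      have hk : k₀ + ((n:ℝ))⁻¹ • ((n:ℝ) • (k - k₀)) = k := by
        rw [smul_smul, inv_mul_cancel₀ hn0, one_smul]
        abel
      have hcast : ((g k : ℂ) - (lam : ℂ)) * u n k
          = ((((n:ℝ) ^ ((ν:ℝ)/2)) : ℝ) : ℂ) *
              ((((g k - lam : ℝ)) : ℂ) * f ((n:ℝ) • (k - k₀))) := by
        rw [hu n k]; push_cast; ring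
      rw [hcast, sq_enorm_mul _ (Real.rpow_nonneg (Nat.cast_nonneg n) _),
        nnnorm_mul, ENNReal.coe_mul,
        ENNReal.mul_rpow_of_ne_top ENNReal.coe_ne_top ENNReal.coe_ne_top,
        Complex.nnnorm_real, hFdef]
      simp only []
      rw [hk]
    calc ∫⁻ k, ((‖((g k : ℂ) - (lam : ℂ)) * u n k‖₊ : ℝ≥0∞)) ^ (2:ℝ)
        = ∫⁻ k, ENNReal.ofReal (((n:ℝ) ^ ((ν:ℝ)/2)) ^ (2:ℝ)) * F n ((n:ℝ) • (k - k₀)) := by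
          simp_rw [heq]
      _ = ENNReal.ofReal (((n:ℝ) ^ ((ν:ℝ)/2)) ^ (2:ℝ)) *
            ∫⁻ k, F n ((n:ℝ) • (k - k₀)) := lintegral_const_mul _ ((hFmeas n).comp (hmap n))
      _ = ENNReal.ofReal (((n:ℝ) ^ ((ν:ℝ)/2)) ^ (2:ℝ)) *
            (ENNReal.ofReal (|(n:ℝ)| ^ ν)⁻¹ * ∫⁻ x, F n x) := by
          rw [aux_scale k₀ _ (hFmeas n) _ hn0]
      _ = ∫⁻ x, F n x := by rw [← mul_assoc, hconst n hn, one_mul]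
  have part2 : Tendsto (fun n : ℕ =>
      eLpNorm (fun k => ((g k : ℂ) - (lam : ℂ)) * u n k) 2
        (volume : Measure (EuclideanSpace ℝ (Fin ν)))) atTop (nhds 0) := by
    have hJ : Tendsto (fun n : ℕ =>
        ∫⁻ k, ((‖((g k : ℂ) - (lam : ℂ)) * u n k‖₊ : ℝ≥0∞)) ^ (2:ℝ)) atTop (nhds 0) := by
      refine hTendF.congr' ?_
      filter_upwards [eventually_ge_atTop 1] with n hn
      exact (hJF n hn).symm
    have := hJ.ennrpow_const (1/2)
    rw [ENNReal.zero_rpow_of_pos (by norm_num)] at this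
    refine this.congr ?_
    intro n
    rw [eLpNorm_eq_lintegral_rpow_enorm_toReal two_ne_zero ENNReal.ofNat_ne_top, h2R]
    simp_rw [enorm_eq_nnnorm]
  refine ⟨part1, part2, ?_⟩
  intro h hh
  have hIh : ∫⁻ k, ((‖h k‖₊ : ℝ≥0∞)) ^ (2:ℝ) ≠ ∞ := by
    have hlt := hh.eLpNorm_lt_top
    rw [eLpNorm_eq_lintegral_rpow_enorm_toReal two_ne_zero ENNReal.ofNat_ne_top, h2R] at hlt
    simp_rw [enorm_eq_nnnorm] at hlt
    intro hcon
    rw [hcon] at hlt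
    simp [ENNReal.top_rpow_of_pos (by norm_num : (0:ℝ) < 1/2)] at hlt
  have hham : AEMeasurable (fun k => ((‖h k‖₊ : ℝ≥0∞))) volume := hh.1.enorm
  have hham2 : AEMeasurable (fun k => ((‖h k‖₊ : ℝ≥0∞)) ^ (2:ℝ)) volume := hham.pow_const _
  haveI : Nontrivial (EuclideanSpace ℝ (Fin ν)) :=
    Module.nontrivial_of_finrank_pos (R := ℝ)
      (by rw [finrank_euclideanSpace_fin]; omega)
  have hae : ∀ᵐ k ∂(volume : Measure (EuclideanSpace ℝ (Fin ν))), k ≠ k₀ := by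
    have hs : {k : EuclideanSpace ℝ (Fin ν) | ¬ k ≠ k₀} = {k₀} := by ext; simp
    rw [ae_iff, hs]
    exact measure_singleton _
  set B : ℕ → Set (EuclideanSpace ℝ (Fin ν)) :=
    fun n => Metric.closedBall k₀ (R * ((n:ℝ))⁻¹) with hBdef
  -- the tail integrals of ‖h‖² tend to zero
  have hTn : Tendsto (fun n : ℕ =>
      ∫⁻ k, (B n).indicator (fun k => ((‖h k‖₊ : ℝ≥0∞)) ^ (2:ℝ)) k) atTop (nhds 0) := by
    have hlim : ∀ᵐ k ∂(volume : Measure (EuclideanSpace ℝ (Fin ν))),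
        Tendsto (fun n : ℕ => (B n).indicator (fun k => ((‖h k‖₊ : ℝ≥0∞)) ^ (2:ℝ)) k)
          atTop (nhds 0) := by
      filter_upwards [hae] with k hk
      have hd : 0 < dist k k₀ := dist_pos.2 hk
      have hrad : Tendsto (fun n : ℕ => R * ((n:ℝ))⁻¹) atTop (nhds 0) := by
        have h1 : Tendsto (fun n : ℕ => ((n:ℝ))⁻¹) atTop (nhds 0) :=
          tendsto_inv_atTop_zero.comp tendsto_natCast_atTop_atTop
        simpa using h1.const_mul R
      have hev : ∀ᶠ n : ℕ in atTop, k ∉ B n := by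
        filter_upwards [hrad.eventually_lt_const hd] with n hn
        simp only [hBdef, Metric.mem_closedBall]
        exact not_le.2 hn
      refine Tendsto.congr' ?_ tendsto_const_nhds
      filter_upwards [hev] with n hn
      exact (Set.indicator_of_notMem hn _).symm
    have := tendsto_lintegral_of_dominated_convergence'
      (fun k => ((‖h k‖₊ : ℝ≥0∞)) ^ (2:ℝ))
      (fun n => hham2.indicator Metric.isClosed_closedBall.measurableSet)
      (fun n => Filter.Eventually.of_forall (fun k => Set.indicator_le_self _ _ k))
      hIh hlim
    simpa using this
  -- u n vanishes outside B n
  have huzero : ∀ n : ℕ, 1 ≤ n → ∀ k, k ∉ B n → u n k = 0 := by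
    intro n hn k hkB
    have hnpos : (0:ℝ) < (n:ℝ) := by exact_mod_cast hn
    have hdist : R * ((n:ℝ))⁻¹ < dist k k₀ :=
      not_le.1 (by simpa [hBdef, Metric.mem_closedBall] using hkB)
    have hRlt : R < ‖(n:ℝ) • (k - k₀)‖ := by
      rw [norm_smul, Real.norm_eq_abs, abs_of_pos hnpos]
      have h1 : R / (n:ℝ) < dist k k₀ := by rwa [div_eq_mul_inv]
      have h2 : R < dist k k₀ * (n:ℝ) := (div_lt_iff₀ hnpos).1 h1
      rw [dist_eq_norm] at h2
      linarith
    have hnot : (n:ℝ) • (k - k₀) ∉ tsupport f := by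
      intro hmem
      have := hR hmem
      rw [Metric.mem_closedBall, dist_zero_right] at this
      exact absurd this (not_le.2 hRlt)
    rw [hu n k, image_eq_zero_of_notMem_tsupport hnot, mul_zero]
  -- measurability of u n
  have hueqfun : ∀ n : ℕ, u n = fun k =>
      ((((n:ℝ) ^ ((ν:ℝ)/2)) : ℝ) : ℂ) * f ((n:ℝ) • (k - k₀)) := fun n => funext (hu n)
  have hucont : ∀ n : ℕ, Continuous (u n) := by
    intro n
    rw [hueqfun n]
    exact continuous_const.mul (hf.comp (by fun_prop : Continuous fun k : EuclideanSpace ℝ (Fin ν) => (n:ℝ) • (k - k₀)))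
  set A : ℕ → ℝ≥0∞ := fun n => ∫⁻ k, ((‖u n k‖₊ : ℝ≥0∞)) * ((‖h k‖₊ : ℝ≥0∞)) with hAdef
  have hpq : Real.HolderConjugate 2 2 := Real.HolderConjugate.two_two
  have hAle : ∀ n : ℕ, 1 ≤ n → A n ≤
      (∫⁻ x, ((‖f x‖₊ : ℝ≥0∞)) ^ (2:ℝ)) ^ (1/(2:ℝ)) *
      (∫⁻ k, (B n).indicator (fun k => ((‖h k‖₊ : ℝ≥0∞)) ^ (2:ℝ)) k) ^ (1/(2:ℝ)) := by
    intro n hn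
    have hkey : ∀ k, ((‖u n k‖₊ : ℝ≥0∞)) * ((‖h k‖₊ : ℝ≥0∞))
        = ((‖u n k‖₊ : ℝ≥0∞)) * (B n).indicator (fun k => ((‖h k‖₊ : ℝ≥0∞))) k := by
      intro k
      by_cases hkB : k ∈ B n
      · rw [Set.indicator_of_mem hkB]
      · rw [Set.indicator_of_notMem hkB, huzero n hn k hkB]
        simp
    have hBmeas : MeasurableSet (B n) := Metric.isClosed_closedBall.measurableSet
    have hholder := ENNReal.lintegral_mul_le_Lp_mul_Lq volume hpq
      (f := fun k => ((‖u n k‖₊ : ℝ≥0∞)))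
      (g := fun k => (B n).indicator (fun k => ((‖h k‖₊ : ℝ≥0∞))) k)
      ((hucont n).measurable.nnnorm.coe_nnreal_ennreal.aemeasurable)
      (hham.indicator hBmeas)
    have hindpow : ∀ k, ((B n).indicator (fun k => ((‖h k‖₊ : ℝ≥0∞))) k) ^ (2:ℝ)
        = (B n).indicator (fun k => ((‖h k‖₊ : ℝ≥0∞)) ^ (2:ℝ)) k := by
      intro k
      by_cases hkB : k ∈ B n
      · simp [Set.indicator_of_mem hkB]
      · simp [Set.indicator_of_notMem hkB, ENNReal.zero_rpow_of_pos (by norm_num : (0:ℝ) < 2)]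
    calc A n = ∫⁻ k, ((‖u n k‖₊ : ℝ≥0∞)) * (B n).indicator (fun k => ((‖h k‖₊ : ℝ≥0∞))) k := by
          rw [hAdef]; exact lintegral_congr hkey
      _ ≤ (∫⁻ k, ((‖u n k‖₊ : ℝ≥0∞)) ^ (2:ℝ)) ^ (1/(2:ℝ)) *
          (∫⁻ k, ((B n).indicator (fun k => ((‖h k‖₊ : ℝ≥0∞))) k) ^ (2:ℝ)) ^ (1/(2:ℝ)) := hholder
      _ = (∫⁻ x, ((‖f x‖₊ : ℝ≥0∞)) ^ (2:ℝ)) ^ (1/(2:ℝ)) *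
          (∫⁻ k, (B n).indicator (fun k => ((‖h k‖₊ : ℝ≥0∞)) ^ (2:ℝ)) k) ^ (1/(2:ℝ)) := by
          rw [hInt n hn]
          congr 1
          congr 1
          exact lintegral_congr hindpow
  have hrhs : Tendsto (fun n : ℕ =>
      (∫⁻ x, ((‖f x‖₊ : ℝ≥0∞)) ^ (2:ℝ)) ^ (1/(2:ℝ)) *
      (∫⁻ k, (B n).indicator (fun k => ((‖h k‖₊ : ℝ≥0∞)) ^ (2:ℝ)) k) ^ (1/(2:ℝ)))
      atTop (nhds 0) := by
    have h8 := hTn.ennrpow_const (1/2)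
    rw [ENNReal.zero_rpow_of_pos (by norm_num : (0:ℝ) < 1/2)] at h8
    have hIf12 : (∫⁻ x, ((‖f x‖₊ : ℝ≥0∞)) ^ (2:ℝ)) ^ (1/(2:ℝ)) ≠ ⊤ :=
      ENNReal.rpow_ne_top_of_nonneg (by norm_num) hIf
    have h9 := ENNReal.Tendsto.const_mul h8 (Or.inr hIf12)
    rw [mul_zero] at h9
    exact h9
  have hAn0 : Tendsto A atTop (nhds 0) := by
    refine tendsto_of_tendsto_of_tendsto_of_le_of_le' tendsto_const_nhds hrhs
      (Filter.Eventually.of_forall (fun n => zero_le)) ?_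
    filter_upwards [eventually_ge_atTop 1] with n hn
    exact hAle n hn
  have hAreal : Tendsto (fun n => (A n).toReal) atTop (nhds 0) := by
    have := (ENNReal.tendsto_toReal (by simp : (0:ℝ≥0∞) ≠ ⊤)).comp hAn0
    simpa [Function.comp_def] using this
  rw [tendsto_zero_iff_norm_tendsto_zero]
  refine squeeze_zero (fun n => norm_nonneg _) (fun n => ?_) hAreal
  have heqA : ∫⁻ k, ENNReal.ofReal ‖(starRingEnd ℂ) (u n k) * h k‖ = A n := by
    rw [hAdef]
    refine lintegral_congr (fun k => ?_)
    rw [ofReal_norm_eq_enorm, enorm_eq_nnnorm, nnnorm_mul, ENNReal.coe_mul, RCLike.nnnorm_conj]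
  exact (norm_integral_le_lintegral_norm _).trans (le_of_eq (by rw [heqA]))
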